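/- The linear program: minimize s₁ + s₂ + s₃ subject to (t/(t−1))s₁ + s₂ + s₃ ≥ 1, s₁ + (2t−1)s₂ + s₃ ≥ 1, s ≥ 0, where t > 1 is real, has optimal value (2t² − 4t + 3)/(2t² − 2t + 1), attained at s₁ = 2(t−1)²/(2t²−2t+1), s₂ = 1/(2t²−2t+1), s₃ = 0. -/

import Mathlib

/-- The LP `min s₁+s₂+s₃` s.t. `(t/(t-1))s₁+s₂+s₃ ≥ 1`, `s₁+(2t-1)s₂+s₃ ≥ 1`, `s ≥ 0`
(with `t > 1`) has optimal value `(2t²-4t+3)/(2t²-2t+1)`, attained at the stated point. -/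
theorem stmt_5 (t : ℝ) (ht : 1 < t) :
    IsLeast {v : ℝ | ∃ s₁ s₂ s₃ : ℝ, 0 ≤ s₁ ∧ 0 ≤ s₂ ∧ 0 ≤ s₃ ∧
        1 ≤ (t / (t - 1)) * s₁ + s₂ + s₃ ∧ 1 ≤ s₁ + (2 * t - 1) * s₂ + s₃ ∧
        v = s₁ + s₂ + s₃}
      ((2 * t ^ 2 - 4 * t + 3) / (2 * t ^ 2 - 2 * t + 1)) ∧
    (0 ≤ 2 * (t - 1) ^ 2 / (2 * t ^ 2 - 2 * t + 1) ∧
      0 ≤ 1 / (2 * t ^ 2 - 2 * t + 1) ∧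
      1 ≤ (t / (t - 1)) * (2 * (t - 1) ^ 2 / (2 * t ^ 2 - 2 * t + 1)) +
          1 / (2 * t ^ 2 - 2 * t + 1) + 0 ∧
      1 ≤ 2 * (t - 1) ^ 2 / (2 * t ^ 2 - 2 * t + 1) +
          (2 * t - 1) * (1 / (2 * t ^ 2 - 2 * t + 1)) + 0 ∧
      (2 * t ^ 2 - 4 * t + 3) / (2 * t ^ 2 - 2 * t + 1) =
        2 * (t - 1) ^ 2 / (2 * t ^ 2 - 2 * t + 1) + 1 / (2 * t ^ 2 - 2 * t + 1) + 0) := by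
  have ht1 : (0:ℝ) < t - 1 := by linarith
  have hD : (0:ℝ) < 2 * t ^ 2 - 2 * t + 1 := by nlinarith
  have hc1 : 1 ≤ (t / (t - 1)) * (2 * (t - 1) ^ 2 / (2 * t ^ 2 - 2 * t + 1)) +
      1 / (2 * t ^ 2 - 2 * t + 1) + 0 := by
    have e : (t / (t - 1)) * (2 * (t - 1) ^ 2 / (2 * t ^ 2 - 2 * t + 1)) =
        (2 * t * (t - 1)) / (2 * t ^ 2 - 2 * t + 1) := by
      field_simp
    rw [e, ← add_div, add_zero, le_div_iff₀ hD]
    nlinarith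
  have hc2 : 1 ≤ 2 * (t - 1) ^ 2 / (2 * t ^ 2 - 2 * t + 1) +
      (2 * t - 1) * (1 / (2 * t ^ 2 - 2 * t + 1)) + 0 := by
    rw [mul_one_div, ← add_div, add_zero, le_div_iff₀ hD]
    nlinarith
  have heq : (2 * t ^ 2 - 4 * t + 3) / (2 * t ^ 2 - 2 * t + 1) =
      2 * (t - 1) ^ 2 / (2 * t ^ 2 - 2 * t + 1) + 1 / (2 * t ^ 2 - 2 * t + 1) + 0 := by
    rw [← add_div, add_zero]
    ring_nf
  refine ⟨⟨⟨2 * (t - 1) ^ 2 / (2 * t ^ 2 - 2 * t + 1), 1 / (2 * t ^ 2 - 2 * t + 1), 0,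
      by positivity, by positivity, le_refl 0, hc1, hc2, heq⟩, ?_⟩,
    by positivity, by positivity, hc1, hc2, heq⟩
  rintro v ⟨s₁, s₂, s₃, h1, h2, h3, h4, h5, rfl⟩
  rw [div_le_iff₀ hD]
  have h4' : t - 1 ≤ t * s₁ + (t - 1) * s₂ + (t - 1) * s₃ := by
    have := mul_le_mul_of_nonneg_left h4 ht1.le
    rw [mul_one] at this
    calc t - 1 ≤ (t - 1) * ((t / (t - 1)) * s₁ + s₂ + s₃) := this
      _ = t * s₁ + (t - 1) * s₂ + (t - 1) * s₃ := by field_simp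
  nlinarith [mul_nonneg (mul_nonneg ht1.le ht1.le) h3,
    mul_le_mul_of_nonneg_left h5 (by positivity : (0:ℝ) ≤ (t-1)^2),
    mul_le_mul_of_nonneg_left h4' ht1.le]
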